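/- For a subcollection 𝓒 ⊆ 𝓡 of groups, let σ_G(s,t | 𝓒) denote the group Steiner distance between s and t with respect to the groups in 𝓒 (so σ_G(s,t | ∅) = d_G(s,t)). Then for every non-empty 𝓒 ⊆ 𝓡, every s ∈ V, and every r ∈ R: σ_G(s,r | 𝓒) = min over r' ∈ ⋃_{R_i ∈ 𝓒} R_i of [ σ_G(s,r' | 𝓒 \ {R_j ∈ 𝓒 : r' ∈ R_j}) + d_G(r', r) ]. -/

import Mathlib

open SimpleGraph ENNReal

/-- The length (total weight) of a walk: the sum of its edge weights, with multiplicity. -/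
def walkWeight {V : Type*} {G : SimpleGraph V} (w : V → V → ℝ) {u v : V} (p : G.Walk u v) : ℝ :=
  (p.darts.map (fun d => w d.toProd.1 d.toProd.2)).sum

/-- A walk is a group Steiner path w.r.t. the groups `R` if it visits at least one
vertex of every group. -/
def IsGroupSteiner {V : Type*} {G : SimpleGraph V} {k : ℕ} (R : Fin k → Set V) {u v : V}
    (p : G.Walk u v) : Prop :=
  ∀ i, ∃ x ∈ R i, x ∈ p.support

/-- The group Steiner distance: the infimum of the lengths of group Steiner paths
from `s` to `t` (`∞` if there is none). -/
noncomputable def gsDist {V : Type*} (G : SimpleGraph V) (w : V → V → ℝ) {k : ℕ}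
    (R : Fin k → Set V) (s t : V) : ℝ≥0∞ :=
  ⨅ p : {p : G.Walk s t // IsGroupSteiner R p}, ENNReal.ofReal (walkWeight w p.1)

/-- The ordinary shortest-path distance: the infimum of the lengths of walks
from `s` to `t` (`∞` if there is none). -/
noncomputable def spDist {V : Type*} (G : SimpleGraph V) (w : V → V → ℝ) (s t : V) : ℝ≥0∞ :=
  ⨅ p : G.Walk s t, ENNReal.ofReal (walkWeight w p)

/-- The group Steiner distance w.r.t. the subcollection of groups indexed by `C`:
the infimum of the lengths of walks from `s` to `t` visiting every group `R i`, `i ∈ C`. -/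
noncomputable def gsDistOn {V : Type*} (G : SimpleGraph V) (w : V → V → ℝ) {k : ℕ}
    (R : Fin k → Set V) (C : Set (Fin k)) (s t : V) : ℝ≥0∞ :=
  ⨅ p : {p : G.Walk s t // ∀ i ∈ C, ∃ x ∈ R i, x ∈ p.support},
    ENNReal.ofReal (walkWeight w p.1)


lemma walkWeight_nonneg {V : Type*} {G : SimpleGraph V} (w : V → V → ℝ)
    (hw : ∀ u v, 0 ≤ w u v) {u v : V} (p : G.Walk u v) : 0 ≤ walkWeight w p := by
  apply List.sum_nonneg
  intro x hx
  obtain ⟨d, _, rfl⟩ := List.mem_map.1 hx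
  exact hw _ _

lemma walkWeight_append {V : Type*} {G : SimpleGraph V} (w : V → V → ℝ) {u v x : V}
    (p : G.Walk u v) (q : G.Walk v x) :
    walkWeight w (p.append q) = walkWeight w p + walkWeight w q := by
  simp [walkWeight, Walk.darts_append]

lemma walkWeight_reverse {V : Type*} {G : SimpleGraph V} (w : V → V → ℝ)
    (hsymm : ∀ u v, w u v = w v u) {u v : V} (p : G.Walk u v) :
    walkWeight w p.reverse = walkWeight w p := by
  simp only [walkWeight, Walk.darts_reverse, List.map_reverse, List.sum_reverse, List.map_map]
  congr 1
  apply List.map_congr_left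
  intro d _
  simp [Dart.symm, hsymm d.toProd.1 d.toProd.2]

lemma split_walk {V : Type*} {G : SimpleGraph V} (w : V → V → ℝ) {k : ℕ}
    (R : Fin k → Set V) (C : Set (Fin k)) (hC : C.Nonempty) {r s : V}
    (q : G.Walk r s) (hq : ∀ i ∈ C, ∃ x ∈ R i, x ∈ q.support) :
    ∃ r' ∈ ⋃ i ∈ C, R i, ∃ (q1 : G.Walk r r') (q2 : G.Walk r' s),
      (∀ j ∈ C, r' ∉ R j → ∃ x ∈ R j, x ∈ q2.support) ∧
      walkWeight w q1 + walkWeight w q2 = walkWeight w q := by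
  induction q with
  | nil =>
    obtain ⟨i, hi⟩ := hC
    obtain ⟨x, hxR, hxs⟩ := hq i hi
    simp only [Walk.support_nil, List.mem_singleton] at hxs
    subst hxs
    refine ⟨x, Set.mem_biUnion hi hxR, Walk.nil, Walk.nil, ?_, by simp [walkWeight]⟩
    intro j hj hxj
    obtain ⟨y, hyR, hys⟩ := hq j hj
    simp only [Walk.support_nil, List.mem_singleton] at hys
    subst hys
    exact absurd hyR hxj
  | @cons a b c hadj q' ih =>
    by_cases hu : a ∈ ⋃ i ∈ C, R i
    · exact ⟨a, hu, Walk.nil, Walk.cons hadj q', fun j hj hj' => hq j hj,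
        by simp [walkWeight]⟩
    · have hq' : ∀ i ∈ C, ∃ x ∈ R i, x ∈ q'.support := by
        intro i hi
        obtain ⟨x, hxR, hxs⟩ := hq i hi
        refine ⟨x, hxR, ?_⟩
        rw [Walk.support_cons, List.mem_cons] at hxs
        rcases hxs with rfl | hx
        · exact absurd (Set.mem_biUnion hi hxR) hu
        · exact hx
      obtain ⟨r', hr', q1, q2, hvis, hwt⟩ := ih hq'
      refine ⟨r', hr', Walk.cons hadj q1, q2, hvis, ?_⟩
      simp only [walkWeight, Walk.darts_cons, List.map_cons, List.sum_cons] at *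
      linarith

/-- The dynamic-programming recurrence for group Steiner distances:
for a non-empty subcollection `𝓒` and a required vertex `r`,
`σ(s,r | 𝓒) = min_{r' ∈ ⋃_{R_i ∈ 𝓒} R_i} σ(s,r' | 𝓒 \ {R_j ∈ 𝓒 : r' ∈ R_j}) + d(r',r)`. -/
theorem stmt_18 {V : Type*} [Fintype V] (G : SimpleGraph V) (hconn : G.Connected)
    (w : V → V → ℝ) (hw : ∀ u v, 0 ≤ w u v) (hsymm : ∀ u v, w u v = w v u)
    {k : ℕ} (R : Fin k → Set V) (hR : ∀ i, (R i).Nonempty)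
    (C : Set (Fin k)) (hC : C.Nonempty)
    (s : V) (r : V) (hr : r ∈ ⋃ i, R i) :
    gsDistOn G w R C s r =
      ⨅ r' ∈ ⋃ i ∈ C, R i,
        gsDistOn G w R {j | j ∈ C ∧ r' ∉ R j} s r' + spDist G w r' r := by
  apply le_antisymm
  · refine le_iInf₂ fun r' hr' => ?_
    conv_rhs => rw [gsDistOn, spDist, ENNReal.iInf_add]
    refine le_iInf fun p1 => ?_
    rw [ENNReal.add_iInf]
    refine le_iInf fun p2 => ?_
    have hprop : ∀ i ∈ C, ∃ x ∈ R i, x ∈ (p1.1.append p2).support := by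
      intro i hi
      by_cases hri : r' ∈ R i
      · exact ⟨r', hri, (Walk.mem_support_append_iff _ _).2 (Or.inl p1.1.end_mem_support)⟩
      · obtain ⟨x, hxR, hxs⟩ := p1.2 i ⟨hi, hri⟩
        exact ⟨x, hxR, (Walk.mem_support_append_iff _ _).2 (Or.inl hxs)⟩
    calc gsDistOn G w R C s r ≤ ENNReal.ofReal (walkWeight w (p1.1.append p2)) :=
          iInf_le (fun p : {p : G.Walk s r // ∀ i ∈ C, ∃ x ∈ R i, x ∈ p.support} =>
            ENNReal.ofReal (walkWeight w p.1)) ⟨p1.1.append p2, hprop⟩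
      _ ≤ _ := by rw [walkWeight_append]; exact ENNReal.ofReal_add_le
  · rw [gsDistOn]
    refine le_iInf fun p => ?_
    obtain ⟨r', hr', q1, q2, hvis, hwt⟩ := split_walk w R C hC p.1.reverse (by
      intro i hi
      obtain ⟨x, hxR, hxs⟩ := p.2 i hi
      exact ⟨x, hxR, by rwa [Walk.support_reverse, List.mem_reverse]⟩)
    refine le_trans (iInf₂_le r' hr') ?_
    have h1 : gsDistOn G w R {j | j ∈ C ∧ r' ∉ R j} s r' ≤
        ENNReal.ofReal (walkWeight w q2.reverse) :=
      iInf_le (fun p : {p : G.Walk s r' // ∀ i ∈ {j | j ∈ C ∧ r' ∉ R j}, ∃ x ∈ R i,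
          x ∈ p.support} => ENNReal.ofReal (walkWeight w p.1)) ⟨q2.reverse, by
        intro j hj
        obtain ⟨x, hxR, hxs⟩ := hvis j hj.1 hj.2
        exact ⟨x, hxR, by rwa [Walk.support_reverse, List.mem_reverse]⟩⟩
    have h2 : spDist G w r' r ≤ ENNReal.ofReal (walkWeight w q1.reverse) :=
      iInf_le _ q1.reverse
    calc _ ≤ ENNReal.ofReal (walkWeight w q2.reverse) +
          ENNReal.ofReal (walkWeight w q1.reverse) := add_le_add h1 h2
      _ = ENNReal.ofReal (walkWeight w p.1) := by
          rw [walkWeight_reverse w hsymm, walkWeight_reverse w hsymm,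
            ← ENNReal.ofReal_add (walkWeight_nonneg w hw _) (walkWeight_nonneg w hw _),
            add_comm, hwt, walkWeight_reverse w hsymm]
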